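/- Let ω be a finite positive Borel measure on [0,1) such that ω̂(0) ≤ C₀·ω̂(1/2) and there exists C > 0 with ω̂(r)(1-r) ≤ C·∫_{[r,1)}(s-r) dω(s) for all r ∈ [1/2,1). Then ω̂ is doubling: there exists C' such that ω̂(r) ≤ C'·ω̂((1+r)/2) for all r ∈ [0,1). -/

import Mathlib

open MeasureTheory Set

theorem step_lemma_stmt10 (ω : Measure ℝ) [IsFiniteMeasure ω] (C : ℝ) (hC : 0 < C)
    (h : ∀ r : ℝ, 1 / 2 ≤ r → r < 1 →
      (ω (Ico r 1)).toReal * (1 - r) ≤ C * ∫ s in Ico r 1, (s - r) ∂ω)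
    (r : ℝ) (hr1 : 1/2 ≤ r) (hr2 : r < 1) :
    (ω (Ico r 1)).toReal ≤ (2*C+1) * (ω (Ico (r + (1-r)/(2*C+1)) 1)).toReal := by
  set t := r + (1-r)/(2*C+1) with ht
  have hden : (0:ℝ) < 2*C+1 := by linarith
  have hfrac : 0 ≤ (1-r)/(2*C+1) := div_nonneg (by linarith) hden.le
  have hrt : r ≤ t := by rw [ht]; linarith
  have ht1 : t ≤ 1 := by
    have h2 : (1-r)/(2*C+1) ≤ 1 - r := by rw [div_le_iff₀ hden]; nlinarith
    rw [ht]; linarith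
  have hint : IntegrableOn (fun s => s - r) (Ico r 1) ω := by
    apply Measure.integrableOn_of_bounded (measure_ne_top ω _)
      ((measurable_id.sub measurable_const).aestronglyMeasurable) (M := 1)
    filter_upwards [ae_restrict_mem measurableSet_Ico] with s hs
    rw [Real.norm_eq_abs, abs_le]
    simp only [Pi.sub_apply, id_eq]
    exact ⟨by linarith [hs.1], by linarith [hs.2]⟩
  have hsub1 : Ico r t ⊆ Ico r 1 := Ico_subset_Ico_right ht1
  have hsub2 : Ico t 1 ⊆ Ico r 1 := Ico_subset_Ico_left hrt
  have split : ∫ s in Ico r 1, (s - r) ∂ω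
      = (∫ s in Ico r t, (s - r) ∂ω) + ∫ s in Ico t 1, (s - r) ∂ω := by
    rw [← Ico_union_Ico_eq_Ico hrt ht1,
      setIntegral_union Ico_disjoint_Ico_same measurableSet_Ico
        (hint.mono_set hsub1) (hint.mono_set hsub2)]
  have b1 : ∫ s in Ico r t, (s - r) ∂ω ≤ (t - r) * (ω (Ico r 1)).toReal := by
    have h3 : ∫ s in Ico r t, (s - r) ∂ω ≤ ∫ _ in Ico r t, (t - r) ∂ω := by
      apply setIntegral_mono_on (hint.mono_set hsub1)
        (integrableOn_const) measurableSet_Ico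
      intro x hx; linarith [hx.2]
    rw [setIntegral_const, smul_eq_mul, measureReal_def] at h3
    have hm : (ω (Ico r t)).toReal ≤ (ω (Ico r 1)).toReal :=
      ENNReal.toReal_mono (measure_ne_top ω _) (measure_mono hsub1)
    have htr : 0 ≤ t - r := by linarith
    nlinarith [h3, hm]
  have b2 : ∫ s in Ico t 1, (s - r) ∂ω ≤ (1 - r) * (ω (Ico t 1)).toReal := by
    have h3 : ∫ s in Ico t 1, (s - r) ∂ω ≤ ∫ _ in Ico t 1, (1 - r) ∂ω := by
      apply setIntegral_mono_on (hint.mono_set hsub2)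
        (integrableOn_const) measurableSet_Ico
      intro x hx; linarith [hx.2]
    rw [setIntegral_const, smul_eq_mul, mul_comm] at h3
    exact h3
  have hx0 : 0 ≤ (ω (Ico r 1)).toReal := ENNReal.toReal_nonneg
  have hy0 : 0 ≤ (ω (Ico t 1)).toReal := ENNReal.toReal_nonneg
  have hmain := h r hr1 hr2
  rw [split] at hmain
  set x := (ω (Ico r 1)).toReal
  set y := (ω (Ico t 1)).toReal
  have heq : (t - r) * (2*C+1) = 1 - r := by
    rw [ht]; field_simp; ring
  have key : x * (1-r) ≤ C * ((t-r) * x + (1-r)*y) := by nlinarith [b1, b2]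
  have hL : 0 < 1 - r := by linarith
  nlinarith [mul_le_mul_of_nonneg_right key hden.le, heq, hy0, hC, hL,
    mul_nonneg hy0 hL.le, mul_pos hL (by linarith : (0:ℝ) < C+1),
    mul_nonneg (mul_nonneg hy0 hL.le) hC.le]

theorem stmt_10 (ω : Measure ℝ) [IsFiniteMeasure ω] (C₀ C : ℝ) (hC₀ : 0 < C₀) (hC : 0 < C)
    (hcero : (ω (Ico (0 : ℝ) 1)).toReal ≤ C₀ * (ω (Ico (1 / 2 : ℝ) 1)).toReal)
    (h : ∀ r : ℝ, 1 / 2 ≤ r → r < 1 →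
      (ω (Ico r 1)).toReal * (1 - r) ≤ C * ∫ s in Ico r 1, (s - r) ∂ω) :
    ∃ C' : ℝ, 0 < C' ∧ ∀ r : ℝ, 0 ≤ r → r < 1 →
      (ω (Ico r 1)).toReal ≤ C' * (ω (Ico ((1 + r) / 2) 1)).toReal := by
  have hden : (0:ℝ) < 2*C+1 := by linarith
  set q : ℝ := 2*C/(2*C+1) with hq
  have hq0 : 0 < q := by positivity
  have hq1 : q < 1 := by rw [hq, div_lt_one hden]; linarith
  have mono : ∀ a b : ℝ, a ≤ b → (ω (Ico b 1)).toReal ≤ (ω (Ico a 1)).toReal := fun a b hab =>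
    ENNReal.toReal_mono (measure_ne_top ω _) (measure_mono (Ico_subset_Ico_left hab))
  -- iteration
  have iter : ∀ n : ℕ, ∀ r : ℝ, 1/2 ≤ r → r < 1 →
      (ω (Ico r 1)).toReal ≤ (2*C+1)^n * (ω (Ico (1 - (1-r)*q^n) 1)).toReal := by
    intro n
    induction n with
    | zero => intro r hr1 hr2; simp
    | succ n ih =>
      intro r hr1 hr2
      have hqn : 0 < q^n := pow_pos hq0 n
      have hqn1 : q^n ≤ 1 := pow_le_one₀ hq0.le hq1.le
      set s := 1 - (1-r)*q^n with hs
      have hs1 : 1/2 ≤ s := by nlinarith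
      have hs2 : s < 1 := by nlinarith
      have h1 := ih r hr1 hr2
      have h2 := step_lemma_stmt10 ω C hC h s hs1 hs2
      have heq : s + (1-s)/(2*C+1) = 1 - (1-r)*q^(n+1) := by
        rw [hs, hq, pow_succ]
        field_simp
        ring
      rw [heq] at h2
      calc (ω (Ico r 1)).toReal ≤ (2*C+1)^n * (ω (Ico s 1)).toReal := h1
        _ ≤ (2*C+1)^n * ((2*C+1) * (ω (Ico (1 - (1-r)*q^(n+1)) 1)).toReal) :=
          mul_le_mul_of_nonneg_left h2 (by positivity)
        _ = (2*C+1)^(n+1) * (ω (Ico (1 - (1-r)*q^(n+1)) 1)).toReal := by ring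
  obtain ⟨n, hn⟩ := exists_pow_lt_of_lt_one (by norm_num : (0:ℝ) < 1/2) hq1
  have hAn : (0:ℝ) < (2*C+1)^n := by positivity
  -- doubling on [1/2, 1)
  have key : ∀ r : ℝ, 1/2 ≤ r → r < 1 →
      (ω (Ico r 1)).toReal ≤ (2*C+1)^n * (ω (Ico ((1+r)/2) 1)).toReal := by
    intro r hr1 hr2
    have h1 := iter n r hr1 hr2
    have h2 : (1+r)/2 ≤ 1 - (1-r)*q^n := by nlinarith [pow_pos hq0 n]
    calc (ω (Ico r 1)).toReal ≤ (2*C+1)^n * (ω (Ico (1 - (1-r)*q^n) 1)).toReal := h1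
      _ ≤ (2*C+1)^n * (ω (Ico ((1+r)/2) 1)).toReal :=
        mul_le_mul_of_nonneg_left (mono _ _ h2) hAn.le
  refine ⟨(1+C₀) * (2*C+1)^n, by positivity, fun r hr0 hr1 => ?_⟩
  have hmid0 : 0 ≤ (ω (Ico ((1+r)/2) 1)).toReal := ENNReal.toReal_nonneg
  rcases le_or_gt (1/2) r with hr | hr
  · have := key r hr hr1
    nlinarith [mul_le_mul_of_nonneg_right (le_of_lt hAn) hmid0]
  · have h1 : (ω (Ico r 1)).toReal ≤ (ω (Ico (0:ℝ) 1)).toReal := mono 0 r hr0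
    have h2 := key (1/2) le_rfl (by norm_num)
    have h3 : (ω (Ico ((1+(1:ℝ)/2)/2) 1)).toReal ≤ (ω (Ico ((1+r)/2) 1)).toReal := by
      apply mono; linarith
    have h4 := mul_le_mul_of_nonneg_left h2 hC₀.le
    have h5 := mul_le_mul_of_nonneg_left h3 (mul_nonneg hC₀.le hAn.le)
    nlinarith [mul_nonneg hAn.le hmid0]
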